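/- Let S_i, T_i ⊆ V(D) and define A_i = S_i × T_i (a set of ordered pairs). Let Z ⊆ V(D), and define A′_i as the set of pairs (u,v) with u,v ∉ Z such that there is a Z-walk (a walk with endpoints u, v outside Z and all internal vertices in Z) from u to v in D containing an arc of A_i. Then A′_i = S′_i × T′_i for some sets S′_i, T′_i of vertices; equivalently, if (u,v) ∈ A′_i and (u′,v′) ∈ A′_i then (u,v′) ∈ A′_i. -/

import Mathlib

/-- Reachability by directed walks in a digraph given by its arc relation. -/
def Reach {V : Type*} (E : V → V → Prop) : V → V → Prop := Relation.ReflTransGen E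

/-- The digraph obtained by deleting the vertex set `X` (induced subgraph on the complement). -/
def Del {V : Type*} (E : V → V → Prop) (X : Set V) : V → V → Prop :=
  fun u v => E u v ∧ u ∉ X ∧ v ∉ X

/-- Two vertices are strongly connected (in the same strongly connected component). -/
def SCC {V : Type*} (E : V → V → Prop) (u v : V) : Prop := Reach E u v ∧ Reach E v u

/-- A closed directed walk, given as the list of visited vertices (first = last). -/
def ClosedWalk {V : Type*} (E : V → V → Prop) (l : List V) : Prop :=
  l.Chain' E ∧ 2 ≤ l.length ∧ l.head? = l.getLast?

/-- The walk `l` traverses an arc from the arc set `A`. -/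
def ContainsArc {V : Type*} (A : V → V → Prop) (l : List V) : Prop :=
  ∃ l₁ a b l₂, l = l₁ ++ a :: b :: l₂ ∧ A a b

/-- A `Z`-walk from `u` to `v`: a directed walk with endpoints `u, v ∉ Z`
and all internal vertices in `Z`. -/
def ZWalk {V : Type*} (E : V → V → Prop) (Z : Set V) (u v : V) (l : List V) : Prop :=
  l.Chain' E ∧ 2 ≤ l.length ∧ l.head? = some u ∧ l.getLast? = some v ∧
  u ∉ Z ∧ v ∉ Z ∧ ∀ x ∈ (l.drop 1).dropLast, x ∈ Z


lemma internal_eq {V : Type*} (p q : List V) (a b : V) :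
    ((p ++ a :: b :: q).drop 1).dropLast = (p ++ [a]).drop 1 ++ (b :: q).dropLast := by
  cases p with
  | nil => simp
  | cons h t => simp [List.dropLast_append_cons]

/-- The lifted terminal-arc set `A' = {(u,v) : some Z-walk from u to v contains an arc of
A = S × T}` is again a product of two vertex sets: it is closed under exchanging second
coordinates. -/
theorem lifted_arcs_are_rectangle {V : Type*} (E : V → V → Prop) (S T Z : Set V)
    (hST : ∀ a ∈ S, ∀ b ∈ T, E a b)
    (A' : V → V → Prop)
    (hA' : ∀ u v, A' u v ↔
      ∃ l, ZWalk E Z u v l ∧ ContainsArc (fun a b => a ∈ S ∧ b ∈ T) l)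
    {u v u' v' : V} (h1 : A' u v) (h2 : A' u' v') : A' u v' := by
  rw [hA'] at h1 h2 ⊢
  obtain ⟨l, ⟨hc1, hlen1, hh1, hl1, huZ, hvZ, hint1⟩, p, a, b, q, rfl, haS, hbT⟩ := h1
  obtain ⟨m, ⟨hc2, hlen2, hh2, hl2, hu'Z, hv'Z, hint2⟩, p', a', b', q', rfl, ha'S, hb'T⟩ := h2
  rw [List.append_cons p a, List.Chain', List.isChain_append] at hc1
  rw [List.append_cons p' a', List.Chain', List.isChain_append] at hc2
  refine ⟨p ++ a :: b' :: q', ⟨?_, ?_, ?_, ?_, huZ, hv'Z, ?_⟩, p, a, b', q', rfl, haS, hb'T⟩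
  · rw [List.append_cons p a, List.Chain', List.isChain_append]
    refine ⟨hc1.1, hc2.2.1, ?_⟩
    intro x hx y hy
    simp at hy
    subst hy
    have : a = x := by simpa using hx
    subst this
    exact hST _ haS _ hb'T
  · simp; omega
  · cases p <;> simpa using hh1
  · rw [List.getLast?_append_cons] at hl2 ⊢
    simpa [List.getLast?_cons_cons] using hl2
  · intro x hx
    rw [internal_eq] at hx
    rcases List.mem_append.mp hx with hx | hx
    · exact hint1 _ (by rw [internal_eq]; exact List.mem_append_left _ hx)
    · exact hint2 _ (by rw [internal_eq]; exact List.mem_append_right _ hx)
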